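/- Let Com be a communication model with synch ⊆ Com. If a global type G is deadlock-free realisable in Com, then G is deadlock-free realisable in synch. -/

import Mathlib

/-! ## Common definitions: actions, executions, MSCs, communication models,
communicating finite state machines, and global types. -/

/-- Actions: a send `p▷q!m` or a receive `p▷q?m`. -/
inductive Act (P M : Type) : Type where
  | snd (p q : P) (m : M)
  | rcv (p q : P) (m : M)
deriving DecidableEq

namespace Act
variable {P M : Type}

/-- The process executing an action: a send belongs to the sender,
a receive belongs to the receiver. -/
def proc : Act P M → P
  | .snd p _ _ => p
  | .rcv _ q _ => q

end Act

/-- Raw executions: a word of actions together with a source function on positions. -/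
structure Exec (P M : Type) : Type where
  w : List (Act P M)
  src : ℕ → ℕ

namespace Exec
variable {P M : Type}

def act? (e : Exec P M) (i : ℕ) : Option (Act P M) := e.w[i]?

def IsSend (e : Exec P M) (i : ℕ) : Prop := ∃ p q m, e.act? i = some (.snd p q m)

def IsRecv (e : Exec P M) (i : ℕ) : Prop := ∃ p q m, e.act? i = some (.rcv p q m)

/-- Well-formedness of an execution: each receive event `r` labelled `p▷q?m` has a
source send event `src r < r` labelled `p▷q!m`, and `src` is injective on receive events. -/
def WF (e : Exec P M) : Prop :=
  (∀ i p q m, e.act? i = some (.rcv p q m) →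
    e.src i < i ∧ e.act? (e.src i) = some (.snd p q m)) ∧
  (∀ i j, e.IsRecv i → e.IsRecv j → e.src i = e.src j → i = j)

/-- A send event is matched if it is the source of some receive event. -/
def Matched (e : Exec P M) (s : ℕ) : Prop := ∃ r, e.IsRecv r ∧ e.src r = s

def OrphanFree (e : Exec P M) : Prop := ∀ s, e.IsSend s → e.Matched s

/-- Prefix of executions: the word is a prefix and the source functions agree
on the receive events of the shorter one. -/
def IsPrefix (e₁ e₂ : Exec P M) : Prop :=
  e₁.w <+: e₂.w ∧ ∀ i, e₁.IsRecv i → e₁.src i = e₂.src i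

/-- Projection of an execution onto the actions of a process. -/
def proj (e : Exec P M) [DecidableEq P] (p : P) : List (Act P M) :=
  e.w.filter (fun a => decide (a.proc = p))

/-- The MSC event `(process, index within the process)` at a position of the word. -/
def evOf (e : Exec P M) [DecidableEq P] (i : ℕ) : Option (P × ℕ) :=
  (e.act? i).map
    (fun a => (a.proc, ((e.w.take i).filter (fun b => decide (b.proc = a.proc))).length))

/-- The position in the word of the `i`-th event of process `p`. -/
def posOf (e : Exec P M) [DecidableEq P] (ev : P × ℕ) : ℕ :=
  ((List.range e.w.length).filter
    (fun k => decide ((e.act? k).map Act.proc = some ev.1))).getD ev.2 0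

end Exec

/-- Raw MSCs: a word of actions per process, and a source function on events. -/
structure MSC (P M : Type) : Type where
  w : P → List (Act P M)
  src : P × ℕ → P × ℕ

namespace MSC
variable {P M : Type}

def act? (Mm : MSC P M) (ev : P × ℕ) : Option (Act P M) := (Mm.w ev.1)[ev.2]?

def IsSend (Mm : MSC P M) (ev : P × ℕ) : Prop := ∃ p q m, Mm.act? ev = some (.snd p q m)

def IsRecv (Mm : MSC P M) (ev : P × ℕ) : Prop := ∃ p q m, Mm.act? ev = some (.rcv p q m)

/-- Well-formedness of an MSC. -/
def WF (Mm : MSC P M) : Prop :=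
  (∀ p, ∀ a ∈ Mm.w p, a.proc = p) ∧
  (∀ ev p q m, Mm.act? ev = some (.rcv p q m) → Mm.act? (Mm.src ev) = some (.snd p q m)) ∧
  (∀ ev ev', Mm.IsRecv ev → Mm.IsRecv ev' → Mm.src ev = Mm.src ev' → ev = ev')

/-- Basic happens-before steps: process order and message order. -/
inductive hbBase (Mm : MSC P M) : P × ℕ → P × ℕ → Prop where
  | proc (p : P) (i j : ℕ) : i < j → j < (Mm.w p).length → hbBase Mm (p, i) (p, j)
  | msg (ev : P × ℕ) : Mm.IsRecv ev → hbBase Mm (Mm.src ev) ev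

/-- The happens-before relation: least transitive relation containing the basic steps. -/
def hb (Mm : MSC P M) : P × ℕ → P × ℕ → Prop := Relation.TransGen (hbBase Mm)

/-- Prefix of MSCs. -/
def IsPrefix (M₁ M₂ : MSC P M) : Prop :=
  (∀ p, M₁.w p <+: M₂.w p) ∧ ∀ ev, M₁.IsRecv ev → M₁.src ev = M₂.src ev

end MSC

/-- Prefix closure of a set of MSCs. -/
def prefSet {P M : Type} (X : Set (MSC P M)) : Set (MSC P M) :=
  {Mm | ∃ M' ∈ X, Mm.IsPrefix M'}

/-- The MSC of an execution: project onto each process and lift the source function. -/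
def Exec.toMSC {P M : Type} [DecidableEq P] (e : Exec P M) : MSC P M where
  w p := e.w.filter (fun a => decide (a.proc = p))
  src ev := (e.evOf (e.src (e.posOf ev))).getD ev

/-- The linearisations of an MSC, identified with the executions they induce. -/
def lin {P M : Type} [DecidableEq P] (Mm : MSC P M) : Set (Exec P M) :=
  {e | e.WF ∧ e.toMSC = Mm}

/-- The linearisations of an MSC lying in a communication model. -/
def linC {P M : Type} [DecidableEq P] (Com : Set (Exec P M)) (Mm : MSC P M) :
    Set (Exec P M) :=
  lin Mm ∩ Com

/-- A communication model (a set of executions) is causally closed if whenever an MSC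
has a linearisation in the model, all its linearisations are in the model. -/
def CausallyClosed {P M : Type} [DecidableEq P] (Com : Set (Exec P M)) : Prop :=
  ∀ Mm : MSC P M, (linC Com Mm).Nonempty → linC Com Mm = lin Mm

/-- The MSCs linearisable in a communication model. -/
def MSCModel {P M : Type} [DecidableEq P] (Com : Set (Exec P M)) : Set (MSC P M) :=
  {Mm | (linC Com Mm).Nonempty}

/-- The bag communication model: all executions. -/
def bag {P M : Type} : Set (Exec P M) := {e | e.WF}

/-- The synchronous communication model: every send is immediately followed by
its matching receive. -/
def synch {P M : Type} : Set (Exec P M) :=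
  {e | e.WF ∧ ∀ s, e.IsSend s → e.IsRecv (s + 1) ∧ e.src (s + 1) = s}

/-- The peer-to-peer communication model. -/
def p2p {P M : Type} : Set (Exec P M) :=
  {e | e.WF ∧ ∀ s₁ s₂ p q m₁ m₂,
    e.act? s₁ = some (.snd p q m₁) → e.act? s₂ = some (.snd p q m₂) → s₁ < s₂ →
    (¬ e.Matched s₂ ∨
      ∃ r₁ r₂, r₁ < r₂ ∧ e.IsRecv r₁ ∧ e.IsRecv r₂ ∧ e.src r₁ = s₁ ∧ e.src r₂ = s₂)}

/-- Happens-before between positions of an execution, through its MSC. -/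
def Exec.hbM {P M : Type} [DecidableEq P] (e : Exec P M) (i j : ℕ) : Prop :=
  ∃ ev₁ ev₂, e.evOf i = some ev₁ ∧ e.evOf j = some ev₂ ∧ e.toMSC.hb ev₁ ev₂

/-- The causally ordered communication model. -/
def causal {P M : Type} [DecidableEq P] : Set (Exec P M) :=
  {e | e.WF ∧ ∀ s₁ s₂ p₁ p₂ q m₁ m₂,
    e.act? s₁ = some (.snd p₁ q m₁) → e.act? s₂ = some (.snd p₂ q m₂) → e.hbM s₁ s₂ →
    (¬ e.Matched s₂ ∨
      ∃ r₁ r₂, e.hbM r₁ r₂ ∧ e.IsRecv r₁ ∧ e.IsRecv r₂ ∧ e.src r₁ = s₁ ∧ e.src r₂ = s₂)}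

/-- A communicating finite state machine: an NFA with ε-transitions
(over the actions of a process) with finitely many states. -/
structure CFSM (A : Type) : Type 1 where
  State : Type
  fin : Fintype State
  aut : εNFA A State

instance {A : Type} (c : CFSM A) : Fintype c.State := c.fin

/-- The machine obtained by making all states accepting. -/
def CFSM.up {A : Type} (c : CFSM A) : CFSM A :=
  ⟨c.State, c.fin, { c.aut with accept := Set.univ }⟩

/-- Making all states of all machines of a system accepting. -/
def sysUp {P M : Type} (S : P → CFSM (Act P M)) : P → CFSM (Act P M) :=
  fun p => (S p).up

/-- `Exec(S, Com)`: the executions of a system of CFSMs in a communication model. -/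
def ExecSys {P M : Type} [DecidableEq P] (S : P → CFSM (Act P M)) (Com : Set (Exec P M)) :
    Set (Exec P M) :=
  {e | e ∈ Com ∧ ∀ p, e.proj p ∈ (S p).aut.accepts}

/-- `MSC(S, Com)`: the MSCs of the executions of a system of CFSMs. -/
def MSCSys {P M : Type} [DecidableEq P] (S : P → CFSM (Act P M)) (Com : Set (Exec P M)) :
    Set (MSC P M) :=
  Exec.toMSC '' ExecSys S Com

/-- A system is deadlock-free for `Com` if every execution of the system with all states
accepting is a prefix of an accepting execution of the system. -/
def DeadlockFree {P M : Type} [DecidableEq P] (S : P → CFSM (Act P M))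
    (Com : Set (Exec P M)) : Prop :=
  ∀ e ∈ ExecSys (sysUp S) Com, ∃ e' ∈ ExecSys S Com, e.IsPrefix e'

/-- A system is orphan-free for `Com` if all its executions are orphan-free. -/
def SysOrphanFree {P M : Type} [DecidableEq P] (S : P → CFSM (Act P M))
    (Com : Set (Exec P M)) : Prop :=
  ∀ e ∈ ExecSys S Com, e.OrphanFree

/-- An arrow `p→q:m` with `p ≠ q`. -/
def Arrow (P M : Type) : Type := {x : P × P × M // x.1 ≠ x.2.1}

namespace Arrow
variable {P M : Type}

def sender (a : Arrow P M) : P := a.1.1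
def receiver (a : Arrow P M) : P := a.1.2.1
def msg (a : Arrow P M) : M := a.1.2.2
def sendAct (a : Arrow P M) : Act P M := .snd a.sender a.receiver a.msg
def recvAct (a : Arrow P M) : Act P M := .rcv a.sender a.receiver a.msg

/-- Two arrows commute when their pairs of processes are disjoint. -/
def Commutes (a b : Arrow P M) : Prop :=
  a.sender ≠ b.sender ∧ a.sender ≠ b.receiver ∧
    a.receiver ≠ b.sender ∧ a.receiver ≠ b.receiver

instance [DecidableEq P] [Fintype P] [Fintype M] : Fintype (Arrow P M) :=
  Subtype.fintype _

end Arrow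

/-- A global type: a deterministic finite (possibly partial) automaton over arrows. -/
structure GType (P M : Type) : Type 1 where
  State : Type
  fin : Fintype State
  step : State → Arrow P M → Option State
  start : State
  accept : Set State

instance {P M : Type} (G : GType P M) : Fintype G.State := G.fin

namespace GType
variable {P M : Type}

def evalFrom (G : GType P M) (s : Option G.State) (w : List (Arrow P M)) : Option G.State :=
  w.foldl (fun s a => s.bind (fun q => G.step q a)) s

/-- The word language of a global type. -/
def lang (G : GType P M) : Set (List (Arrow P M)) :=
  {w | ∃ s, G.evalFrom (some G.start) w = some s ∧ s ∈ G.accept}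

/-- The arrows labelling the outgoing transitions of a state. -/
def choices (G : GType P M) (s : G.State) : Set (Arrow P M) := {a | (G.step s a).isSome}

/-- Commutation-determinism: no two arrows available at a same state commute. -/
def CommDet (G : GType P M) : Prop :=
  ∀ s : G.State, ∀ a ∈ G.choices s, ∀ b ∈ G.choices s, ¬ a.Commutes b

/-- Sender-driven choice: all arrows available at a same state have the same sender. -/
def SenderDriven (G : GType P M) : Prop :=
  ∀ s : G.State, ∀ a ∈ G.choices s, ∀ b ∈ G.choices s, a.sender = b.sender

end GType

/-- The synchronous execution coded by a sequence of arrows. -/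
def execOfArrows {P M : Type} (w : List (Arrow P M)) : Exec P M where
  w := (w.map (fun a => [a.sendAct, a.recvAct])).flatten
  src := fun i => i - 1

/-- The MSC coded by a sequence of arrows. -/
def mscOfArrows {P M : Type} [DecidableEq P] (w : List (Arrow P M)) : MSC P M :=
  (execOfArrows w).toMSC

/-- The set of MSCs of sequences of arrows (MSCs linearisable in the synchronous model). -/
def MSCsynch (P M : Type) [DecidableEq P] : Set (MSC P M) :=
  Set.range (mscOfArrows (P := P) (M := M))

/-- The existential MSC language of a global type. -/
def Lexists {P M : Type} [DecidableEq P] (G : GType P M) : Set (MSC P M) :=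
  mscOfArrows '' G.lang

/-- The universal MSC language of a global type. -/
def Lforall {P M : Type} [DecidableEq P] (G : GType P M) : Set (MSC P M) :=
  {Mm | (∃ w, mscOfArrows w = Mm) ∧ ∀ w, mscOfArrows w = Mm → w ∈ G.lang}

/-- A global type is commutation-closed when its existential and universal MSC
languages coincide. -/
def GType.CommClosed {P M : Type} [DecidableEq P] (G : GType P M) : Prop :=
  Lexists G = Lforall G

/-- The relabelling of an arrow for the projection onto process `p`. -/
def projLabel {P M : Type} [DecidableEq P] (p : P) (a : Arrow P M) : Option (Act P M) :=
  if a.sender = p then some a.sendAct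
  else if a.receiver = p then some a.recvAct
  else none

/-- The projected system of CFSMs of a global type. -/
def projG {P M : Type} [DecidableEq P] (G : GType P M) : P → CFSM (Act P M) :=
  fun p =>
    ⟨G.State, G.fin,
      { step := fun s oa =>
          {s' | ∃ arr : Arrow P M, G.step s arr = some s' ∧ projLabel p arr = oa},
        start := {G.start},
        accept := G.accept }⟩

/-- `Exec(G, Com)`: the semantics of a global type in a communication model. -/
def ExecG {P M : Type} [DecidableEq P] (G : GType P M) (Com : Set (Exec P M)) :
    Set (Exec P M) :=
  {e | ∃ Mm ∈ Lexists G, e ∈ linC Com Mm}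

/-- Deadlock-free realisability of a global type in a communication model:
(CC) conformance and (DF) deadlock freedom of the projected system. -/
def DFRealisable {P M : Type} [DecidableEq P] (G : GType P M) (Com : Set (Exec P M)) : Prop :=
  ExecSys (projG G) Com = ExecG G Com ∧ DeadlockFree (projG G) Com

/-- The synchronous product of a system of CFSMs: an ε-NFA over arrows. -/
def syncProd {P M : Type} (S : P → CFSM (Act P M)) :
    εNFA (Arrow P M) (∀ p, (S p).State) where
  step st oa :=
    match oa with
    | some a =>
        {st' | st' a.sender ∈ (S a.sender).aut.step (st a.sender) (some a.sendAct) ∧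
               st' a.receiver ∈ (S a.receiver).aut.step (st a.receiver) (some a.recvAct) ∧
               ∀ r, r ≠ a.sender → r ≠ a.receiver → st' r = st r}
    | none =>
        {st' | ∃ p, st' p ∈ (S p).aut.step (st p) none ∧ ∀ r, r ≠ p → st' r = st r}
  start := {st | ∀ p, st p ∈ (S p).aut.start}
  accept := {st | ∀ p, st p ∈ (S p).aut.accept}

/-- `prod(S)`: the powerset determinisation of the synchronous product, a global type. -/
noncomputable def prodG {P M : Type} [Fintype P] (S : P → CFSM (Act P M)) : GType P M :=
  let A := (syncProd S).toNFA.toDFA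
  { State := Set (∀ p, (S p).State)
    fin := by
      haveI : Finite (∀ p, (S p).State) := inferInstance
      exact Fintype.ofFinite _
    step := fun s a => some (A.step s a)
    start := A.start
    accept := A.accept }

/-- The product `G₁ ⊗ G₂` of two global types (language intersection). -/
def prodGT {P M : Type} (G₁ G₂ : GType P M) : GType P M where
  State := G₁.State × G₂.State
  fin := inferInstance
  step s a := (G₁.step s.1 a).bind fun q₁ => (G₂.step s.2 a).map fun q₂ => (q₁, q₂)
  start := (G₁.start, G₂.start)
  accept := {s | s.1 ∈ G₁.accept ∧ s.2 ∈ G₂.accept}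

/-- The dual of a global type: complete it and swap accepting and non-accepting states. -/
def dualG {P M : Type} (G : GType P M) : GType P M where
  State := Option G.State
  fin := inferInstance
  step s a := some (s.bind fun q => G.step q a)
  start := some G.start
  accept := {s | ∀ q, s = some q → q ∉ G.accept}

/-- RSC executions: every receive immediately follows its source send. -/
def RSCexec {P M : Type} : Set (Exec P M) :=
  {e | e.WF ∧ ∀ r, e.IsRecv r → e.src r = r - 1}

/-- The MSCs admitting an RSC linearisation. -/
def MSCrsc {P M : Type} [DecidableEq P] : Set (MSC P M) :=
  {Mm | ∃ e ∈ RSCexec (P := P) (M := M), e.toMSC = Mm}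

/-- A set of MSCs is RegSC if some NFA over actions accepts exactly the RSC executions
whose MSC belongs to the set. -/
def RegSCset {P M : Type} [DecidableEq P] (X : Set (MSC P M)) : Prop :=
  ∃ (σ : Type) (_ : Fintype σ) (A : NFA (Act P M) σ),
    ∀ w : List (Act P M),
      w ∈ A.accepts ↔ ∃ e ∈ RSCexec (P := P) (M := M), e.w = w ∧ e.toMSC ∈ X

/-- A communication model is RegSC if the set of its RSC-linearisable MSCs is RegSC. -/
def RegSCmodel {P M : Type} [DecidableEq P] (Com : Set (Exec P M)) : Prop :=
  RegSCset (MSCModel Com ∩ MSCrsc)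


/-! ## Auxiliary lemmas for Statement 15 -/

section Stmt15Aux

variable {P M : Type} [DecidableEq P]

lemma sender_ne (a : Arrow P M) : a.sender ≠ a.receiver := a.2

lemma arrow_ext {a b : Arrow P M} (h1 : a.sender = b.sender) (h2 : a.receiver = b.receiver)
    (h3 : a.msg = b.msg) : a = b := by
  obtain ⟨⟨x1, x2, x3⟩, _⟩ := a; obtain ⟨⟨y1, y2, y3⟩, _⟩ := b
  simp only [Arrow.sender, Arrow.receiver, Arrow.msg] at h1 h2 h3
  subst h1; subst h2; subst h3; rfl

lemma sendAct_inj {a b : Arrow P M} (h : a.sendAct = b.sendAct) : a = b := by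
  simp only [Arrow.sendAct, Act.snd.injEq] at h
  exact arrow_ext h.1 h.2.1 h.2.2

lemma recvAct_inj {a b : Arrow P M} (h : a.recvAct = b.recvAct) : a = b := by
  simp only [Arrow.recvAct, Act.rcv.injEq] at h
  exact arrow_ext h.1 h.2.1 h.2.2

/-- The contribution of an arrow to the projection onto process `p`. -/
def contrib (p : P) (a : Arrow P M) : List (Act P M) :=
  (if a.sender = p then [a.sendAct] else []) ++ (if a.receiver = p then [a.recvAct] else [])

/-- The projection of a word of arrows onto the actions of process `p`. -/
def projA (p : P) (z : List (Arrow P M)) : List (Act P M) :=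
  (z.map (contrib p)).flatten

lemma projA_cons (p : P) (a : Arrow P M) (z : List (Arrow P M)) :
    projA p (a :: z) = contrib p a ++ projA p z := by
  simp [projA]

lemma projA_append (p : P) (z₁ z₂ : List (Arrow P M)) :
    projA p (z₁ ++ z₂) = projA p z₁ ++ projA p z₂ := by
  simp [projA]

lemma contrib_sender (a : Arrow P M) : contrib a.sender a = [a.sendAct] := by
  simp [contrib, Ne.symm (sender_ne a)]

lemma contrib_receiver (a : Arrow P M) : contrib a.receiver a = [a.recvAct] := by
  simp [contrib, sender_ne a]

lemma contrib_other {p : P} (a : Arrow P M) (h1 : a.sender ≠ p) (h2 : a.receiver ≠ p) :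
    contrib p a = [] := by simp [contrib, h1, h2]

lemma mem_contrib {x : Act P M} {p : P} {a : Arrow P M} (h : x ∈ contrib p a) :
    x = a.sendAct ∨ x = a.recvAct := by
  unfold contrib at h
  split_ifs at h <;> simp_all

lemma projA_eq_nil {p : P} {w : List (Arrow P M)} (h : ∀ c ∈ w, contrib p c = []) :
    projA p w = [] := by
  induction w with
  | nil => rfl
  | cons c w ih =>
    rw [projA_cons, h c (by simp), List.nil_append]
    exact ih fun d hd => h d (by simp [hd])

lemma eoa_w_cons (a : Arrow P M) (z : List (Arrow P M)) :
    (execOfArrows (a :: z)).w = a.sendAct :: a.recvAct :: (execOfArrows z).w := by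
  simp [execOfArrows]

lemma eoa_w_append (z₁ z₂ : List (Arrow P M)) :
    (execOfArrows (z₁ ++ z₂)).w = (execOfArrows z₁).w ++ (execOfArrows z₂).w := by
  simp [execOfArrows]

lemma eoa_proj (z : List (Arrow P M)) (p : P) : (execOfArrows z).proj p = projA p z := by
  induction z with
  | nil => rfl
  | cons a z ih =>
    show ((execOfArrows (a :: z)).w.filter _) = _
    rw [eoa_w_cons, projA_cons]
    simp only [List.filter_cons]
    have hps : (a.sendAct).proc = a.sender := rfl
    have hpr : (a.recvAct).proc = a.receiver := rfl
    rw [hps, hpr]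
    have ih' : ((execOfArrows z).w.filter (fun x => decide (x.proc = p))) = projA p z := ih
    by_cases h1 : a.sender = p <;> by_cases h2 : a.receiver = p <;>
      simp [h1, h2, contrib, ih']

lemma eoa_act (z : List (Arrow P M)) (k : ℕ) :
    (execOfArrows z).act? (2*k) = z[k]?.map Arrow.sendAct ∧
    (execOfArrows z).act? (2*k+1) = z[k]?.map Arrow.recvAct := by
  induction z generalizing k with
  | nil => simp [execOfArrows, Exec.act?]
  | cons a z ih =>
    cases k with
    | zero => simp [Exec.act?, eoa_w_cons]
    | succ k =>
      constructor
      · have h1 : 2*(k+1) = (2*k+1)+1 := by ring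
        rw [h1]
        have h2 : (execOfArrows (a :: z)).act? ((2*k+1)+1) = (execOfArrows z).act? (2*k) := by
          simp [Exec.act?, eoa_w_cons a z]
        rw [h2, (ih k).1]
        simp
      · have h1 : 2*(k+1)+1 = ((2*k+1)+1)+1 := by ring
        rw [h1]
        have h2 : (execOfArrows (a :: z)).act? (((2*k+1)+1)+1) = (execOfArrows z).act? (2*k+1) := by
          simp [Exec.act?, eoa_w_cons a z]
        rw [h2, (ih k).2]
        simp

lemma eoa_act_cases {z : List (Arrow P M)} {i : ℕ} {x : Act P M}
    (h : (execOfArrows z).act? i = some x) :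
    (∃ k c, i = 2*k ∧ z[k]? = some c ∧ x = c.sendAct) ∨
    (∃ k c, i = 2*k+1 ∧ z[k]? = some c ∧ x = c.recvAct) := by
  rcases Nat.even_or_odd i with ⟨k, hk⟩ | ⟨k, hk⟩
  · left
    have hk' : i = 2*k := by omega
    rw [hk', (eoa_act z k).1] at h
    obtain ⟨c, hc, hx⟩ := Option.map_eq_some_iff.mp h
    exact ⟨k, c, hk', hc, hx.symm⟩
  · right
    rw [hk, (eoa_act z k).2] at h
    obtain ⟨c, hc, hx⟩ := Option.map_eq_some_iff.mp h
    exact ⟨k, c, hk, hc, hx.symm⟩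

lemma eoa_src (z : List (Arrow P M)) (i : ℕ) : (execOfArrows z).src i = i - 1 := rfl

lemma eoa_synch (z : List (Arrow P M)) : execOfArrows z ∈ synch := by
  have key : ∀ i p q m, (execOfArrows z).act? i = some (.rcv p q m) →
      ∃ k c, i = 2*k+1 ∧ z[k]? = some c ∧ c.sender = p ∧ c.receiver = q ∧ c.msg = m := by
    intro i p q m h
    rcases eoa_act_cases h with ⟨k, c, hi, hc, hx⟩ | ⟨k, c, hi, hc, hx⟩
    · simp [Arrow.sendAct] at hx
    · obtain ⟨h1, h2, h3⟩ : p = c.sender ∧ q = c.receiver ∧ m = c.msg := by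
        simpa [Arrow.recvAct] using hx
      exact ⟨k, c, hi, hc, h1.symm, h2.symm, h3.symm⟩
  refine ⟨⟨?_, ?_⟩, ?_⟩
  · intro i p q m h
    obtain ⟨k, c, hi, hc, h1, h2, h3⟩ := key i p q m h
    subst hi
    have hsrc : (execOfArrows z).src (2*k+1) = 2*k := by
      rw [eoa_src]; omega
    refine ⟨by rw [hsrc]; omega, ?_⟩
    rw [hsrc, (eoa_act z k).1, hc]
    simp [Arrow.sendAct, h1, h2, h3]
  · intro i j hi hj hij
    obtain ⟨p, q, m, hi'⟩ := hi
    obtain ⟨p', q', m', hj'⟩ := hj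
    obtain ⟨k, _, hk, _⟩ := key _ _ _ _ hi'
    obtain ⟨l, _, hl, _⟩ := key _ _ _ _ hj'
    rw [eoa_src, eoa_src] at hij
    omega
  · intro s hs
    obtain ⟨p, q, m, hs'⟩ := hs
    rcases eoa_act_cases hs' with ⟨k, c, hk, hc, hx⟩ | ⟨k, c, hk, hc, hx⟩
    · subst hk
      refine ⟨⟨c.sender, c.receiver, c.msg, ?_⟩, ?_⟩
      · rw [(eoa_act z k).2, hc]; rfl
      · rw [eoa_src]; omega
    · simp [Arrow.recvAct] at hx

lemma synch_src {e : Exec P M} (he : e ∈ synch) {r : ℕ} {p q : P} {m : M}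
    (h : e.act? r = some (.rcv p q m)) : e.src r = r - 1 ∧ 1 ≤ r := by
  obtain ⟨hwf, hsy⟩ := he
  obtain ⟨hlt, hact⟩ := hwf.1 r p q m h
  obtain ⟨hr', hs'⟩ := hsy (e.src r) ⟨p, q, m, hact⟩
  have := hwf.2 r (e.src r + 1) ⟨p, q, m, h⟩ hr' hs'.symm
  omega

/-- Actions that arise from arrows. -/
def Shaped (x : Act P M) : Prop := ∃ c : Arrow P M, x = c.sendAct ∨ x = c.recvAct

/-- The tail of an execution, dropping the first two events. -/
def tailExec (e : Exec P M) : Exec P M := ⟨e.w.drop 2, fun i => i - 1⟩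

lemma tailExec_act (e : Exec P M) (i : ℕ) : (tailExec e).act? i = e.act? (i + 2) := by
  show (e.w.drop 2)[i]? = e.w[i + 2]?
  rw [List.getElem?_drop]
  ring_nf

lemma tailExec_src (e : Exec P M) (i : ℕ) : (tailExec e).src i = i - 1 := rfl

lemma extract : ∀ (n : ℕ) (e : Exec P M), e.w.length ≤ n → e ∈ synch →
    (∀ x ∈ e.w, Shaped x) → ∃ z : List (Arrow P M), e.w = (execOfArrows z).w := by
  intro n
  induction n with
  | zero =>
    intro e hl _ _
    have hnil : e.w = [] := List.length_eq_zero_iff.mp (Nat.le_zero.mp hl)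
    exact ⟨[], by rw [hnil]; rfl⟩
  | succ n ih =>
    intro e hl he hsh
    obtain ⟨⟨hwf1, hwf2⟩, hsy⟩ := he
    rcases hw : e.w with _ | ⟨x, _ | ⟨y, t⟩⟩
    · exact ⟨[], rfl⟩
    · exfalso
      have h0 : e.act? 0 = some x := by simp [Exec.act?, hw]
      cases x with
      | rcv p q m =>
        have := (hwf1 0 p q m h0).1; omega
      | snd p q m =>
        obtain ⟨p', q', m', h1'⟩ := (hsy 0 ⟨p, q, m, h0⟩).1
        simp [Exec.act?, hw] at h1'
    · have h0 : e.act? 0 = some x := by simp [Exec.act?, hw]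
      have h1 : e.act? 1 = some y := by simp [Exec.act?, hw]
      obtain ⟨c, hc⟩ := hsh x (by rw [hw]; exact List.mem_cons_self)
      rcases hc with hc | hc
      swap
      · exfalso
        have hx : e.act? 0 = some (.rcv c.sender c.receiver c.msg) := by rw [h0, hc]; rfl
        have := (hwf1 0 c.sender c.receiver c.msg hx).1
        omega
      -- hc : x = c.sendAct
      obtain ⟨hr1, hs1⟩ := hsy 0 ⟨c.sender, c.receiver, c.msg, by rw [h0, hc]; rfl⟩
      obtain ⟨p', q', m', hy⟩ := hr1
      have hsrc0 : e.act? (e.src 1) = some (.snd p' q' m') := (hwf1 1 p' q' m' hy).2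
      rw [hs1, h0, hc] at hsrc0
      have hcomp : c.sender = p' ∧ c.receiver = q' ∧ c.msg = m' := by
        simpa [Arrow.sendAct] using hsrc0
      have hy' : y = Act.rcv c.sender c.receiver c.msg := by
        have hy2 : y = Act.rcv p' q' m' := by
          have := h1.symm.trans hy
          simpa using this
        rw [hy2, hcomp.1, hcomp.2.1, hcomp.2.2]
      -- the synchronous tail execution
      have hetw : (tailExec e).w = t := by
        show e.w.drop 2 = t
        rw [hw]; rfl
      have hsynch : e ∈ synch := ⟨⟨hwf1, hwf2⟩, hsy⟩
      have hrne : ∀ i, (tailExec e).IsRecv i → i ≠ 0 := by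
        rintro i ⟨p2, q2, m2, hi⟩ h0'
        subst h0'
        rw [tailExec_act] at hi
        have h2 := (hwf1 (0 + 2) p2 q2 m2 hi).2
        have hs2 := (synch_src hsynch hi).1
        rw [hs2] at h2
        norm_num at h2
        rw [h1] at h2
        rw [hy'] at h2
        simp at h2
      have hesynch : tailExec e ∈ synch := by
        refine ⟨⟨?_, ?_⟩, ?_⟩
        · intro i p2 q2 m2 hi
          have hi' : e.act? (i + 2) = some (.rcv p2 q2 m2) := by rw [← tailExec_act]; exact hi
          have hne := hrne i ⟨p2, q2, m2, hi⟩
          obtain ⟨j, rfl⟩ : ∃ j, i = j + 1 := ⟨i - 1, by omega⟩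
          have hs := (synch_src hsynch hi').1
          have ha := (hwf1 (j + 1 + 2) p2 q2 m2 hi').2
          rw [hs] at ha
          have heq : j + 1 + 2 - 1 = j + 2 := by omega
          rw [heq] at ha
          have hsrc : (tailExec e).src (j + 1) = j := rfl
          refine ⟨by rw [hsrc]; omega, ?_⟩
          rw [hsrc, tailExec_act]
          exact ha
        · intro i j hi hj hij
          have hi0 := hrne i hi
          have hj0 := hrne j hj
          rw [tailExec_src, tailExec_src] at hij
          omega
        · intro s hs
          obtain ⟨p2, q2, m2, hs'⟩ := hs
          have hs'' : e.act? (s + 2) = some (.snd p2 q2 m2) := by rw [← tailExec_act]; exact hs'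
          obtain ⟨hr, hsrc⟩ := hsy (s + 2) ⟨p2, q2, m2, hs''⟩
          obtain ⟨p3, q3, m3, hr'⟩ := hr
          refine ⟨⟨p3, q3, m3, ?_⟩, ?_⟩
          · rw [tailExec_act]
            exact hr'
          · rw [tailExec_src]; omega
      have hlen : e.w.length = t.length + 2 := by rw [hw]; simp
      have hsh' : ∀ x ∈ (tailExec e).w, Shaped x := by
        intro a ha
        rw [hetw] at ha
        exact hsh a (by rw [hw]; simp [ha])
      obtain ⟨z', hz'⟩ := ih (tailExec e) (by rw [hetw]; omega) hesynch hsh'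
      have hz2 : t = (execOfArrows z').w := by rw [← hetw]; exact hz'
      refine ⟨c :: z', ?_⟩
      rw [eoa_w_cons, hc, hy', hz2]
      rfl

lemma split_lemma (a : Arrow P M) :
    ∀ w : List (Arrow P M),
    (∃ t₁, a.sendAct :: t₁ <+: projA a.sender w) →
    (∃ t₂, a.recvAct :: t₂ <+: projA a.receiver w) →
    ∃ w₁ w₂, w = w₁ ++ a :: w₂ ∧
      ∀ c ∈ w₁, contrib a.sender c = [] ∧ contrib a.receiver c = [] := by
  intro w
  induction w with
  | nil =>
    rintro ⟨t₁, ht₁⟩ _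
    exfalso
    have : projA a.sender ([] : List (Arrow P M)) = [] := rfl
    rw [this] at ht₁
    simpa using ht₁
  | cons c w ih =>
    rintro ⟨t₁, ht₁⟩ ⟨t₂, ht₂⟩
    rw [projA_cons] at ht₁ ht₂
    by_cases h1 : c.sender = a.sender
    · have hcc : contrib a.sender c = [c.sendAct] := by
        have hnr : c.receiver ≠ a.sender := fun hh => (sender_ne c) (h1.trans hh.symm)
        simp [contrib, h1, hnr]
      rw [hcc] at ht₁
      have hh := (List.cons_prefix_cons.mp ht₁).1
      have hca : c = a := sendAct_inj hh.symm
      subst hca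
      exact ⟨[], w, rfl, by simp⟩
    · by_cases h2 : c.receiver = a.sender
      · exfalso
        have hcc : contrib a.sender c = [c.recvAct] := by simp [contrib, h1, h2]
        rw [hcc] at ht₁
        have := (List.cons_prefix_cons.mp ht₁).1
        simp [Arrow.sendAct, Arrow.recvAct] at this
      · have hcs : contrib a.sender c = [] := by simp [contrib, h1, h2]
        by_cases h3 : c.sender = a.receiver
        · exfalso
          have hnr : c.receiver ≠ a.receiver := fun hh => (sender_ne c) (h3.trans hh.symm)
          have hcc : contrib a.receiver c = [c.sendAct] := by simp [contrib, h3, hnr]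
          rw [hcc] at ht₂
          have := (List.cons_prefix_cons.mp ht₂).1
          simp [Arrow.sendAct, Arrow.recvAct] at this
        · by_cases h4 : c.receiver = a.receiver
          · have hcc : contrib a.receiver c = [c.recvAct] := by simp [contrib, h3, h4]
            rw [hcc] at ht₂
            have hh := (List.cons_prefix_cons.mp ht₂).1
            have hca : c = a := recvAct_inj hh.symm
            subst hca
            exact ⟨[], w, rfl, by simp⟩
          · have hcr : contrib a.receiver c = [] := by simp [contrib, h3, h4]
            obtain ⟨w₁, w₂, hsplit, hall⟩ :=
              ih ⟨t₁, by rwa [hcs, List.nil_append] at ht₁⟩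
                 ⟨t₂, by rwa [hcr, List.nil_append] at ht₂⟩
            refine ⟨c :: w₁, w₂, by rw [hsplit]; rfl, ?_⟩
            rintro d hd
            rcases List.mem_cons.mp hd with rfl | hd'
            · exact ⟨hcs, hcr⟩
            · exact hall d hd'

lemma lemA : ∀ (u w : List (Arrow P M)), (∀ p, projA p u <+: projA p w) →
    ∃ v, ∀ p, projA p (u ++ v) = projA p w := by
  intro u
  induction u with
  | nil => intro w _; exact ⟨w, fun p => by simp⟩
  | cons a u ih =>
    intro w h
    have hs := h a.sender
    rw [projA_cons, contrib_sender] at hs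
    have hr := h a.receiver
    rw [projA_cons, contrib_receiver] at hr
    obtain ⟨w₁, w₂, rfl, hall⟩ :=
      split_lemma a w ⟨projA a.sender u, by simpa using hs⟩
        ⟨projA a.receiver u, by simpa using hr⟩
    have hw1s : projA a.sender w₁ = [] := projA_eq_nil fun c hc => (hall c hc).1
    have hw1r : projA a.receiver w₁ = [] := projA_eq_nil fun c hc => (hall c hc).2
    have hpre : ∀ p, projA p u <+: projA p (w₁ ++ w₂) := by
      intro p
      have hp := h p
      rw [projA_cons, projA_append, projA_cons] at hp
      rw [projA_append]
      by_cases h1 : p = a.sender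
      · subst h1
        rw [hw1s, List.nil_append] at hp ⊢
        simpa using hp
      · by_cases h2 : p = a.receiver
        · subst h2
          rw [hw1r, List.nil_append] at hp ⊢
          simpa using hp
        · have hnil : contrib p a = [] :=
            contrib_other a (fun hh => h1 hh.symm) (fun hh => h2 hh.symm)
          rw [hnil, List.nil_append] at hp
          exact hp
    obtain ⟨v, hv⟩ := ih (w₁ ++ w₂) hpre
    refine ⟨v, fun p => ?_⟩
    rw [List.cons_append, projA_cons, hv p, projA_append, projA_append, projA_cons]
    by_cases h1 : p = a.sender
    · subst h1; rw [hw1s]; simp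
    · by_cases h2 : p = a.receiver
      · subst h2; rw [hw1r]; simp
      · rw [contrib_other a (fun hh => h1 hh.symm) (fun hh => h2 hh.symm)]; simp

end Stmt15Aux

/-- if `synch ⊆ Com` and `G` is deadlock-free realisable in `Com`,
then `G` is deadlock-free realisable in `synch`. -/
theorem stmt15 (P Mg : Type) [Fintype P] [DecidableEq P] [Fintype Mg] [DecidableEq Mg]
    (Com : Set (Exec P Mg)) (hsub : (synch : Set (Exec P Mg)) ⊆ Com)
    (G : GType P Mg) (h : DFRealisable G Com) :
    DFRealisable G synch := by
  obtain ⟨hcc, hdf⟩ := h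
  constructor
  · -- (CC) in synch
    ext e
    constructor
    · rintro ⟨hes, hacc⟩
      have heC : e ∈ ExecSys (projG G) Com := ⟨hsub hes, hacc⟩
      rw [hcc] at heC
      obtain ⟨Mm, hMm, hlin, _⟩ := heC
      exact ⟨Mm, hMm, hlin, hes⟩
    · rintro ⟨Mm, hMm, hlin, hes⟩
      have heC : e ∈ ExecG G Com := ⟨Mm, hMm, hlin, hsub hes⟩
      rw [← hcc] at heC
      exact ⟨hes, heC.2⟩
  · -- (DF) in synch
    rintro e ⟨hes, hacc⟩
    have heC : e ∈ ExecSys (sysUp (projG G)) Com := ⟨hsub hes, hacc⟩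
    obtain ⟨e', he's, hpre⟩ := hdf e heC
    obtain ⟨he'C, he'acc⟩ := he's
    have he'G : e' ∈ ExecG G Com := by rw [← hcc]; exact ⟨he'C, he'acc⟩
    obtain ⟨Mm, ⟨w0, _, hw0⟩, ⟨hwf', htoMSC⟩, _⟩ := he'G
    have hproj' : ∀ p, e'.proj p = projA p w0 := by
      intro p
      have h1 : e'.proj p = (execOfArrows w0).proj p := by
        have := congrArg (fun Mx : MSC P Mg => Mx.w p) (htoMSC.trans hw0.symm)
        exact this
      rw [h1]; exact eoa_proj w0 p
    have hepre : ∀ p, e.proj p <+: e'.proj p := fun p => hpre.1.filter _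
    have hsh : ∀ x ∈ e.w, Shaped x := by
      intro x hx
      have hx1 : x ∈ e.proj x.proc := by
        simp [Exec.proj, List.mem_filter, hx]
      have hx2 : x ∈ projA x.proc w0 := by
        rw [← hproj' x.proc]
        exact (hepre x.proc).subset hx1
      rw [projA] at hx2
      rcases List.mem_flatten.mp hx2 with ⟨l, hl, hxl⟩
      rcases List.mem_map.mp hl with ⟨c, _, rfl⟩
      exact ⟨c, mem_contrib hxl⟩
    obtain ⟨u, hu⟩ := extract e.w.length e le_rfl hes hsh
    have hupre : ∀ p, projA p u <+: projA p w0 := by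
      intro p
      rw [← eoa_proj u p, ← hproj' p]
      have h2 : (execOfArrows u).proj p = e.proj p := by
        show (execOfArrows u).w.filter _ = e.w.filter _
        rw [hu]
      rw [h2]
      exact hepre p
    obtain ⟨v, hv⟩ := lemA u w0 hupre
    refine ⟨execOfArrows (u ++ v), ⟨eoa_synch _, ?_⟩, ?_, ?_⟩
    · intro p
      have h3 : (execOfArrows (u ++ v)).proj p = e'.proj p := by
        rw [eoa_proj, hv p, ← hproj' p]
      rw [h3]
      exact he'acc p
    · rw [hu, eoa_w_append]
      exact List.prefix_append _ _
    · rintro i ⟨p, q, m, hi⟩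
      have h1 := (synch_src hes hi).1
      rw [h1, eoa_src]
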